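/- Let Q be a star-shaped subset of the plane with star center A, let H be an open half-plane, and let C be a connected component of Q ∩ H such that A ∉ C. Then A ∉ H and Q \ C is again star-shaped with star center A. -/

import Mathlib

open Set Metric RealInnerProductSpace

abbrev Plane := EuclideanSpace ℝ (Fin 2)

def StarCenter (Q : Set Plane) (A : Plane) : Prop :=
  A ∈ Q ∧ ∀ B ∈ Q, segment ℝ A B ⊆ Q

/-- If `C` is a connected component of `Q ∩ H` for an open half-plane `H`, and the star
center `A` of `Q` is not in `C`, then `A ∉ H` and `Q \ C` is star-shaped with center `A`. -/
theorem stmt_0 (Q : Set Plane) (A : Plane) (hQ : StarCenter Q A)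
    (u : Plane) (hu : u ≠ 0) (c : ℝ)
    (H : Set Plane) (hH : H = {x : Plane | c < (inner ℝ x u : ℝ)})
    (C : Set Plane) (x : Plane) (hx : x ∈ Q ∩ H)
    (hC : C = connectedComponentIn (Q ∩ H) x)
    (hA : A ∉ C) :
    A ∉ H ∧ StarCenter (Q \ C) A := by
  have hlin : IsLinearMap ℝ (fun y : Plane => (inner ℝ y u : ℝ)) :=
    ⟨fun a b => inner_add_left a b u, fun r a => real_inner_smul_left a u r⟩
  have hconv : Convex ℝ H := by
    rw [hH]; exact convex_halfSpace_gt hlin c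
  have hAH : A ∉ H := by
    intro hAH
    have hseg : segment ℝ A x ⊆ Q ∩ H :=
      subset_inter (hQ.2 x hx.1) (hconv.segment_subset hAH hx.2)
    have : segment ℝ A x ⊆ C := by
      rw [hC]
      exact (convex_segment A x).isPreconnected.subset_connectedComponentIn
        (right_mem_segment ℝ A x) hseg
    exact hA (this (left_mem_segment ℝ A x))
  refine ⟨hAH, ⟨hQ.1, hA⟩, fun B hB P hP => ⟨hQ.2 B hB.1 hP, ?_⟩⟩
  intro hPC
  have hPH : P ∈ H := (connectedComponentIn_subset (Q ∩ H) x (hC ▸ hPC)).2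
  by_cases hBH : B ∈ H
  · -- segment A B ∩ H is connected, contains P, inside Q ∩ H, so ⊆ C; then B ∈ C
    have hS : segment ℝ A B ∩ H ⊆ Q ∩ H :=
      fun y hy => ⟨hQ.2 B hB.1 hy.1, hy.2⟩
    have hSC : segment ℝ A B ∩ H ⊆ connectedComponentIn (Q ∩ H) P :=
      ((convex_segment A B).inter hconv).isPreconnected.subset_connectedComponentIn
        ⟨hP, hPH⟩ hS
    have hCeq : C = connectedComponentIn (Q ∩ H) P := by
      rw [hC]; exact connectedComponentIn_eq (hC ▸ hPC)
    exact hB.2 (hCeq ▸ hSC ⟨right_mem_segment ℝ A B, hBH⟩)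
  · -- both endpoints outside H, so P outside H
    have hconv' : Convex ℝ {y : Plane | (inner ℝ y u : ℝ) ≤ c} := convex_halfSpace_le hlin c
    have hAle : (inner ℝ A u : ℝ) ≤ c := by
      by_contra h; exact hAH (hH ▸ lt_of_not_ge h)
    have hBle : (inner ℝ B u : ℝ) ≤ c := by
      by_contra h; exact hBH (hH ▸ lt_of_not_ge h)
    have : (inner ℝ P u : ℝ) ≤ c := hconv'.segment_subset hAle hBle hP
    rw [hH] at hPH
    exact absurd hPH (not_lt.2 this)
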